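/- Let f : A → B be a flat local homomorphism of (commutative) local rings. If B is an integral domain that is integrally closed in its fraction field, then A is an integral domain that is integrally closed in its fraction field. -/

import Mathlib

/-- Let `f : A → B` be a flat local homomorphism of local rings.
If `B` is an integrally closed integral domain, then so is `A`. -/
theorem isIntegrallyClosed_of_flat_localHom
    (A B : Type*) [CommRing A] [CommRing B] [IsLocalRing A] [IsLocalRing B]
    (f : A →+* B) [IsLocalHom f]
    (hflat : letI : Algebra A B := f.toAlgebra; Module.Flat A B)
    [IsDomain B] [IsIntegrallyClosed B] :
    IsDomain A ∧ IsIntegrallyClosed A := by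
  letI : Algebra A B := f.toAlgebra
  haveI : Module.Flat A B := hflat
  have halg : algebraMap A B = f := rfl
  have hsmul : ∀ (r : A) (b : B), r • b = f r * b := fun r b => rfl
  -- faithfully flat
  haveI hff : Module.FaithfullyFlat A B := by
    refine ⟨fun m hm htop => ?_⟩
    have hle : m • (⊤ : Submodule A B) ≤
        (IsLocalRing.maximalIdeal B).restrictScalars A := by
      refine Submodule.smul_le.2 fun r hr b _ => ?_
      have hr' : r ∈ IsLocalRing.maximalIdeal A := by
        rw [← IsLocalRing.eq_maximalIdeal hm]; exact hr
      have : f r ∈ IsLocalRing.maximalIdeal B := by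
        rw [IsLocalRing.mem_maximalIdeal] at hr' ⊢
        exact fun h => hr' (IsLocalHom.map_nonunit r h)
      show r • b ∈ IsLocalRing.maximalIdeal B
      rw [hsmul]
      exact Ideal.mul_mem_right _ _ this
    have h1 : (1 : B) ∈ IsLocalRing.maximalIdeal B := by
      have : (1 : B) ∈ m • (⊤ : Submodule A B) := by rw [htop]; trivial
      exact hle this
    exact (IsLocalRing.maximalIdeal B).ne_top_iff_one.1
      (Ideal.IsMaximal.ne_top inferInstance) h1
  -- key: ideal contraction for principal ideals
  have hkey : ∀ a b : A, f a ∈ Ideal.map f (Ideal.span {b}) → a ∈ Ideal.span {b} := by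
    intro a b hab
    rw [Ideal.map_span, Set.image_singleton, Ideal.mem_span_singleton'] at hab
    obtain ⟨c, hc⟩ := hab
    set I := Ideal.span {b} with hI
    let g : A →ₗ[A] A ⧸ I := I.mkQ ∘ₗ LinearMap.mul A A a
    have hg : g = 0 := by
      rw [Module.FaithfullyFlat.zero_iff_rTensor_zero A B]
      apply LinearMap.ext
      intro z
      induction z using TensorProduct.induction_on with
      | zero => simp
      | add u v hu hv => simp [hu, hv]
      | tmul x y =>
        have : (LinearMap.rTensor B g) (x ⊗ₜ[A] y) =
            (Submodule.Quotient.mk (a * x) : A ⧸ I) ⊗ₜ[A] y := rfl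
        rw [this, LinearMap.zero_apply]
        apply (TensorProduct.quotTensorEquivQuotSMul B I).injective
        rw [map_zero]
        have : (Ideal.Quotient.mk I (a * x)) ⊗ₜ[A] y =
            (Submodule.Quotient.mk (a * x) : A ⧸ I) ⊗ₜ[A] y := rfl
        rw [← this, TensorProduct.quotTensorEquivQuotSMul_mk_tmul]
        rw [Submodule.Quotient.mk_eq_zero]
        have hmem : (a * x) • y = x • (b • (c * y)) := by
          rw [hsmul, hsmul, hsmul, map_mul, ← hc]; ring
        rw [hmem]
        exact Submodule.smul_mem _ x
          (Submodule.smul_mem_smul (Ideal.mem_span_singleton_self b) Submodule.mem_top)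
    have := congrArg (fun h => h 1) (congrArg (fun (h : A →ₗ[A] A ⧸ I) => h.toFun) hg)
    simp only [g, LinearMap.coe_comp, Function.comp_apply] at this
    have h0 : Ideal.Quotient.mk I (a * 1) = 0 := this
    rw [mul_one] at h0
    exact (Submodule.Quotient.mk_eq_zero I).1 h0
  -- f is injective
  have hinj : Function.Injective f := by
    rw [injective_iff_map_eq_zero]
    intro a ha
    have : a ∈ Ideal.span ({0} : Set A) := by
      refine hkey a 0 ?_
      rw [ha]; exact Ideal.zero_mem _
    rw [Ideal.mem_span_singleton'] at this
    obtain ⟨c, hc⟩ := this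
    rw [mul_zero] at hc
    exact hc.symm
  haveI hdom : IsDomain A := hinj.isDomain f
  refine ⟨hdom, ?_⟩
  -- set up fraction fields
  have hsub : Submonoid.map f (nonZeroDivisors A) ≤ nonZeroDivisors B := by
    rintro _ ⟨b, hb, rfl⟩
    refine mem_nonZeroDivisors_of_ne_zero (fun h => ?_)
    have : b = 0 := hinj (by rw [h, map_zero])
    exact (mem_nonZeroDivisors_iff_ne_zero.1 hb) this
  letI F : FractionRing A →+* FractionRing B :=
    IsLocalization.map (M := nonZeroDivisors A) (T := nonZeroDivisors B)
      (FractionRing B) f (Submonoid.map_le_iff_le_comap.mp hsub)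
  have hFcomp : F.comp (algebraMap A (FractionRing A)) =
      (algebraMap B (FractionRing B)).comp f :=
    IsLocalization.map_comp _
  rw [isIntegrallyClosed_iff (FractionRing A)]
  intro x hx
  obtain ⟨p, hmonic, heval⟩ := hx
  have hFx : IsIntegral B (F x) := by
    refine ⟨p.map f, hmonic.map f, ?_⟩
    rw [Polynomial.eval₂_map, ← hFcomp, ← Polynomial.hom_eval₂, heval, map_zero]
  obtain ⟨y, hy⟩ := IsIntegrallyClosed.isIntegral_iff.1 hFx
  obtain ⟨⟨a, b⟩, hx'⟩ := IsLocalization.mk'_surjective (nonZeroDivisors A) x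
  dsimp only at hx'
  have hFmk : F x = IsLocalization.mk' (FractionRing B) (f a)
      ⟨f b, hsub ⟨b, b.2, rfl⟩⟩ := by
    rw [← hx', IsLocalization.map_mk']
  have hfa : f a = y * f b := by
    have h1 : algebraMap B (FractionRing B) (f a) =
        algebraMap B (FractionRing B) (y * f b) := by
      rw [map_mul]
      have := IsLocalization.mk'_spec (FractionRing B) (f a)
        (⟨f b, hsub ⟨b, b.2, rfl⟩⟩ : nonZeroDivisors B)
      rw [← hFmk, ← hy] at this
      rw [← this]
    exact IsFractionRing.injective B (FractionRing B) h1
  have hmem : (a : A) ∈ Ideal.span {(b : A)} := by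
    refine hkey a b ?_
    rw [Ideal.map_span, Set.image_singleton, Ideal.mem_span_singleton']
    exact ⟨y, hfa.symm ▸ rfl⟩
  rw [Ideal.mem_span_singleton'] at hmem
  obtain ⟨c, hc⟩ := hmem
  refine ⟨c, ?_⟩
  rw [← hx', IsLocalization.eq_mk'_iff_mul_eq, ← map_mul, hc]
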